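/- Let x ∈ ℚ_p with ‖x‖_p < 1 (equivalently ‖x‖_p ≤ p^{−1}) and let σ ≥ 1 be an integer. Set ℓ = ⌈log₂(σ+1)⌉. Then there exist integers x_1, …, x_ℓ such that for every s ∈ {1,…,ℓ}: x_s is divisible by p^{max(1, 2^{s−1}−1)}, 0 ≤ x_s < p^{2^s−1}, and the product satisfies ‖(1 − x) − ∏_{s=1}^{ℓ} (1 − x_s)‖_p ≤ p^{−σ} (the integers x_s being viewed in ℚ_p via the canonical map). -/

import Mathlib

private lemma one_lt_p (p : ℕ) [Fact p.Prime] : (1:ℝ) < p := by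
  exact_mod_cast (Fact.out : p.Prime).one_lt

private lemma padic_sub_le_max {p : ℕ} [Fact p.Prime] (a b : ℚ_[p]) :
    ‖a - b‖ ≤ max ‖a‖ ‖b‖ := by
  rw [sub_eq_add_neg]
  simpa using Padic.nonarchimedean a (-b)

private lemma norm_one_sub_of_lt {p : ℕ} [Fact p.Prime] {b : ℚ_[p]} (hb : ‖b‖ < 1) :
    ‖1 - b‖ = 1 := by
  apply le_antisymm
  · calc ‖1 - b‖ ≤ max ‖(1:ℚ_[p])‖ ‖b‖ := padic_sub_le_max _ _
    _ ≤ 1 := by rw [norm_one]; exact max_le le_rfl hb.le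
  · by_contra h
    push_neg at h
    have h2 : ‖(1:ℚ_[p])‖ < 1 := by
      calc ‖(1:ℚ_[p])‖ = ‖(1 - b) + b‖ := by ring_nf
      _ ≤ max ‖1 - b‖ ‖b‖ := Padic.nonarchimedean _ _
      _ < 1 := max_lt h hb
    rw [norm_one] at h2; exact lt_irrefl _ h2

private lemma aux_step (p : ℕ) [Fact p.Prime] :
    ∀ (n k : ℕ) (u : ℚ_[p]),
      ‖1 - u‖ ≤ (p : ℝ) ^ (-((max 1 (2 ^ k - 1) : ℕ) : ℤ)) →
      ∃ xs : Fin n → ℤ,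
        (∀ i : Fin n,
          ((p : ℤ) ^ (max 1 (2 ^ (k + (i : ℕ)) - 1)) ∣ xs i) ∧
          0 ≤ xs i ∧ xs i < (p : ℤ) ^ (2 ^ (k + (i : ℕ) + 1) - 1)) ∧
        ‖u - ∏ i : Fin n, (1 - (xs i : ℚ_[p]))‖ ≤ (p : ℝ) ^ (-((2 ^ (k + n) - 1 : ℕ) : ℤ)) := by
  intro n
  induction n with
  | zero =>
    intro k u hu
    refine ⟨fun _ => 0, fun i => i.elim0, ?_⟩
    simp only [Finset.univ_eq_empty, Finset.prod_empty, Nat.add_zero]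
    calc ‖u - 1‖ = ‖1 - u‖ := by rw [norm_sub_rev]
    _ ≤ (p : ℝ) ^ (-((max 1 (2 ^ k - 1) : ℕ) : ℤ)) := hu
    _ ≤ (p : ℝ) ^ (-((2 ^ k - 1 : ℕ) : ℤ)) := by
        apply zpow_le_zpow_right₀ (one_lt_p p).le
        have := le_max_right 1 (2 ^ k - 1)
        omega
  | succ n ih =>
    intro k u hu
    set m : ℕ := max 1 (2 ^ k - 1) with hm
    set N : ℕ := 2 ^ (k + 1) - 1 with hN
    have h2k : 0 < 2 ^ k := Nat.pow_pos (by norm_num)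
    have hpow : 2 ^ (k + 1) = 2 * 2 ^ k := by rw [pow_succ]; ring
    have hmN : m ≤ N := by rw [hm, hN]; omega
    have hN1 : 1 ≤ N := by rw [hN]; omega
    have hple : (p : ℝ) ^ (-(N : ℤ)) ≤ (p : ℝ) ^ (-(m : ℤ)) :=
      zpow_le_zpow_right₀ (one_lt_p p).le (by omega)
    have hm1 : 1 ≤ m := le_max_left _ _
    have hplt1 : (p : ℝ) ^ (-(m : ℤ)) < 1 :=
      zpow_lt_one_of_neg₀ (one_lt_p p) (by omega)
    have hunorm : ‖1 - u‖ ≤ 1 := le_trans hu hplt1.le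
    set v : ℤ_[p] := ⟨1 - u, hunorm⟩ with hv
    set a : ℤ := (v.appr N : ℤ) with ha
    have hva : ‖1 - u - (a : ℚ_[p])‖ ≤ (p : ℝ) ^ (-(N : ℤ)) := by
      have h1 := (PadicInt.norm_le_pow_iff_mem_span_pow (v - (v.appr N : ℤ_[p])) N).2
        (PadicInt.appr_spec N v)
      rw [PadicInt.norm_def] at h1
      convert h1 using 2
      rw [ha, PadicInt.coe_sub, PadicInt.coe_natCast, Int.cast_natCast]
    have hadvdN : ‖(a : ℚ_[p])‖ ≤ (p : ℝ) ^ (-(m : ℤ)) := by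
      have h2 : (a : ℚ_[p]) = (1 - u) - (1 - u - a) := by ring
      rw [h2]
      calc ‖(1 - u) - (1 - u - (a:ℚ_[p]))‖ ≤ max ‖1 - u‖ ‖1 - u - (a:ℚ_[p])‖ :=
            padic_sub_le_max _ _
      _ ≤ (p : ℝ) ^ (-(m : ℤ)) := max_le hu (le_trans hva hple)
    have hadvd : (p : ℤ) ^ m ∣ a := by
      rw [← Padic.norm_int_le_pow_iff_dvd]; exact hadvdN
    have hanorm : ‖(a : ℚ_[p])‖ < 1 := lt_of_le_of_lt hadvdN hplt1
    have h1a : ‖1 - (a : ℚ_[p])‖ = 1 := norm_one_sub_of_lt hanorm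
    have h1ane : (1 - (a : ℚ_[p])) ≠ 0 := by
      intro h; rw [h, norm_zero] at h1a; norm_num at h1a
    set u' : ℚ_[p] := u / (1 - (a : ℚ_[p])) with hu'
    have hfac : u = (1 - (a : ℚ_[p])) * u' := by rw [hu']; field_simp
    have hu'bound : ‖1 - u'‖ ≤ (p : ℝ) ^ (-((max 1 (2 ^ (k+1) - 1) : ℕ) : ℤ)) := by
      have hmax : (max 1 (2 ^ (k+1) - 1) : ℕ) = N := by rw [hN]; omega
      rw [hmax]
      have h3 : 1 - u' = ((1 - (a:ℚ_[p])) - u) / (1 - (a:ℚ_[p])) := by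
        rw [hu']; field_simp
      rw [h3, norm_div, h1a, div_one]
      calc ‖(1 - (a:ℚ_[p])) - u‖ = ‖1 - u - (a:ℚ_[p])‖ := by ring_nf
      _ ≤ (p : ℝ) ^ (-(N : ℤ)) := hva
    obtain ⟨xs', hxs', hxs'norm⟩ := ih (k + 1) u' hu'bound
    refine ⟨Fin.cons a xs', ?_, ?_⟩
    · intro i
      refine Fin.cases ?_ ?_ i
      · have halt : a < (p:ℤ) ^ N := by
          rw [ha]; exact_mod_cast PadicInt.appr_lt v N
        simp only [Fin.cons_zero, Fin.val_zero, Nat.add_zero]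
        exact ⟨hadvd, by rw [ha]; exact Int.ofNat_nonneg _, by rw [hN] at halt; exact halt⟩
      · intro j
        have h4 := hxs' j
        simp only [Fin.cons_succ, Fin.val_succ]
        rw [show k + ((j:ℕ) + 1) = k + 1 + (j:ℕ) from by omega,
            show k + 1 + (j:ℕ) + 1 = k + 1 + (j:ℕ) + 1 from rfl]
        exact h4
    · have hprod : ∏ i : Fin (n+1), (1 - ((Fin.cons a xs' : Fin (n+1) → ℤ) i : ℚ_[p]))
          = (1 - (a : ℚ_[p])) * ∏ i : Fin n, (1 - (xs' i : ℚ_[p])) := by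
        rw [Fin.prod_univ_succ]; simp
      rw [hprod]
      have h5 : u - (1 - (a:ℚ_[p])) * ∏ i : Fin n, (1 - (xs' i : ℚ_[p]))
          = (1 - (a:ℚ_[p])) * (u' - ∏ i : Fin n, (1 - (xs' i : ℚ_[p]))) := by
        rw [hfac]; ring
      rw [h5, norm_mul, h1a, one_mul]
      calc ‖u' - ∏ i : Fin n, (1 - (xs' i : ℚ_[p]))‖
          ≤ (p : ℝ) ^ (-((2 ^ (k + 1 + n) - 1 : ℕ) : ℤ)) := hxs'norm
      _ = (p : ℝ) ^ (-((2 ^ (k + (n + 1)) - 1 : ℕ) : ℤ)) := by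
          rw [show k + 1 + n = k + (n + 1) from by omega]

theorem digit_burst_log (p : ℕ) [Fact p.Prime]
    (x : ℚ_[p]) (hx : ‖x‖ < 1) (σ : ℕ) (hσ : 1 ≤ σ) :
    ∃ xs : Fin (Nat.clog 2 (σ + 1)) → ℤ,
      (∀ i : Fin (Nat.clog 2 (σ + 1)),
        ((p : ℤ) ^ (max 1 (2 ^ (i : ℕ) - 1)) ∣ xs i) ∧
        0 ≤ xs i ∧ xs i < (p : ℤ) ^ (2 ^ ((i : ℕ) + 1) - 1)) ∧
      ‖(1 - x) - ∏ i : Fin (Nat.clog 2 (σ + 1)), (1 - (xs i : ℚ_[p]))‖ ≤ (p : ℝ) ^ (-(σ : ℤ)) := by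
  have hstart : ‖1 - (1 - x)‖ ≤ (p : ℝ) ^ (-((max 1 (2 ^ 0 - 1) : ℕ) : ℤ)) := by
    simp only [sub_sub_cancel]
    have hmax : (max 1 (2 ^ 0 - 1) : ℕ) = 1 := by norm_num
    rw [hmax]
    have h := (Padic.norm_le_pow_iff_norm_lt_pow_add_one x (-1)).2 (by simpa using hx)
    exact_mod_cast h
  obtain ⟨xs, hxs, hnorm⟩ := aux_step p (Nat.clog 2 (σ + 1)) 0 (1 - x) hstart
  refine ⟨xs, fun i => by simpa using hxs i, ?_⟩
  refine le_trans hnorm ?_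
  apply zpow_le_zpow_right₀ (one_lt_p p).le
  have h := Nat.le_pow_clog (by norm_num : 1 < 2) (σ + 1)
  simp only [zero_add]
  omega
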